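/- For every α ∈ (0,1) there is a constant c = c(α) such that for all v, w ∈ ℝ: (1/c)·(|w| + |v|)^{α-1}·|w - v|² ≤ 𝔟_α[v,w] ≤ c·(|w| + |v|)^{α-1}·|w - v|². -/

import Mathlib

open Real MeasureTheory intervalIntegral Filter Set
open scoped NNReal

noncomputable def bsgn (α x : ℝ) : ℝ := |x| ^ (α - 1) * x

lemma bsgn_neg (α x : ℝ) : bsgn α (-x) = - bsgn α x := by
  simp [bsgn, mul_neg]

lemma bsgn_zero (α : ℝ) : bsgn α 0 = 0 := by simp [bsgn]

lemma bsgn_of_nonneg {α : ℝ} (hα : 0 < α) {x : ℝ} (hx : 0 ≤ x) : bsgn α x = x ^ α := by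
  rcases hx.eq_or_lt with rfl | hx
  · simp [bsgn, Real.zero_rpow hα.ne']
  · rw [bsgn, abs_of_pos hx, ← Real.rpow_add_one hx.ne', sub_add_cancel]

lemma rpow_tangent {α : ℝ} (hα0 : 0 < α) (hα1 : α < 1) {a b : ℝ} (ha : 0 < a) (hb : 0 ≤ b) :
    b ^ α ≤ a ^ α + α * (a ^ α / a) * (b - a) := by
  have hba : (0:ℝ) ≤ b / a := div_nonneg hb ha.le
  have hs : (-1:ℝ) ≤ b / a - 1 := by linarith
  have h := rpow_one_add_le_one_add_mul_self hs hα0.le hα1.le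
  rw [add_sub_cancel] at h
  have h2 : (b / a) ^ α = b ^ α / a ^ α := Real.div_rpow hb ha.le α
  rw [h2] at h
  have hapos : 0 < a ^ α := Real.rpow_pos_of_pos ha _
  have h3 := mul_le_mul_of_nonneg_left h hapos.le
  have e1 : a ^ α * (b ^ α / a ^ α) = b ^ α := by field_simp
  have e2 : a ^ α * (1 + α * (b / a - 1)) = a ^ α + α * (a ^ α / a) * (b - a) := by
    field_simp
  rw [e1, e2] at h3
  exact h3

lemma rpow_subadd {α : ℝ} (hα0 : 0 < α) (hα1 : α < 1) {a b : ℝ} (ha : 0 ≤ a) (hb : 0 ≤ b) :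
    (a + b) ^ α ≤ a ^ α + b ^ α := by
  have h := NNReal.rpow_add_le_add_rpow a.toNNReal b.toNNReal hα0.le hα1.le
  have h' : (((a.toNNReal + b.toNNReal : ℝ≥0) : ℝ)) ^ α ≤
      ((a.toNNReal : ℝ)) ^ α + ((b.toNNReal : ℝ)) ^ α := by
    exact_mod_cast h
  simpa [Real.coe_toNNReal _ ha, Real.coe_toNNReal _ hb] using h'

section AB

lemma lemA_nn {α : ℝ} (hα0 : 0 < α) (hα1 : α < 1) {a b : ℝ} (hb : 0 ≤ b) (hba : b ≤ a) :
    α * (|a| + |b|) ^ (α - 1) * (a - b) ^ 2 ≤ (bsgn α a - bsgn α b) * (a - b) := by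
  have ha : 0 ≤ a := hb.trans hba
  rcases ha.eq_or_lt with rfl | ha
  · have hb0 : b = 0 := le_antisymm hba hb
    subst hb0; simp
  · rw [bsgn_of_nonneg hα0 ha.le, bsgn_of_nonneg hα0 hb]
    have tangent := rpow_tangent hα0 hα1 ha hb
    have h1 : α * (a ^ α / a) * (a - b) ≤ a ^ α - b ^ α := by
      have e : α * (a ^ α / a) * (b - a) = -(α * (a ^ α / a) * (a - b)) := by ring
      rw [e] at tangent; linarith
    have hmono : (|a| + |b|) ^ (α - 1) ≤ a ^ (α - 1) := by
      rw [abs_of_pos ha, abs_of_nonneg hb]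
      exact Real.rpow_le_rpow_of_nonpos ha (by linarith) (by linarith)
    have hda : a ^ (α - 1) = a ^ α / a := Real.rpow_sub_one ha.ne' α
    rw [hda] at hmono
    have hab : 0 ≤ a - b := by linarith
    have h2 := mul_le_mul_of_nonneg_right hmono hab
    have h3 := mul_le_mul_of_nonneg_right h1 hab
    nlinarith [mul_le_mul_of_nonneg_left h2 hα0.le]

lemma lemA_mix {α : ℝ} (hα0 : 0 < α) (hα1 : α < 1) {a b : ℝ} (hb : b ≤ 0) (ha : 0 ≤ a) :
    α * (|a| + |b|) ^ (α - 1) * (a - b) ^ 2 ≤ (bsgn α a - bsgn α b) * (a - b) := by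
  set c : ℝ := -b with hc
  have hc0 : 0 ≤ c := by simp [hc]; linarith
  have habs : |a| + |b| = a + c := by rw [abs_of_nonneg ha, abs_of_nonpos hb]
  have hbs : bsgn α b = -(c ^ α) := by
    rw [show b = -c by simp [hc], bsgn_neg, bsgn_of_nonneg hα0 hc0]
  have has : bsgn α a = a ^ α := bsgn_of_nonneg hα0 ha
  rw [habs, hbs, has, show a - b = a + c by rw [hc]; ring]
  rcases eq_or_lt_of_le (by positivity : (0:ℝ) ≤ a + c) with h0 | hpos
  · rw [← h0]
    simp [Real.zero_rpow (by linarith : α - 1 ≠ 0)]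
  · have e : (a + c) ^ (α - 1) * (a + c) = (a + c) ^ α := by
      rw [← Real.rpow_add_one hpos.ne', sub_add_cancel]
    have sub : (a + c) ^ α ≤ a ^ α + c ^ α := rpow_subadd hα0 hα1 ha hc0
    have hr : 0 ≤ (a + c) ^ α := Real.rpow_nonneg (by linarith) _
    have h1a : (0:ℝ) ≤ 1 - α := by linarith
    have key1 := mul_le_mul_of_nonneg_right sub hpos.le
    have key2 := mul_nonneg (mul_nonneg h1a hr) hpos.le
    calc α * (a + c) ^ (α - 1) * (a + c) ^ 2
        = α * ((a + c) ^ (α - 1) * (a + c)) * (a + c) := by ring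
      _ = α * (a + c) ^ α * (a + c) := by rw [e]
      _ ≤ (a ^ α + c ^ α) * (a + c) := by nlinarith [key1, key2]
      _ = (a ^ α - -(c ^ α)) * (a + c) := by ring

lemma lemA_le {α : ℝ} (hα0 : 0 < α) (hα1 : α < 1) {a b : ℝ} (hba : b ≤ a) :
    α * (|a| + |b|) ^ (α - 1) * (a - b) ^ 2 ≤ (bsgn α a - bsgn α b) * (a - b) := by
  rcases le_or_gt 0 b with hb | hb
  · exact lemA_nn hα0 hα1 hb hba
  · rcases le_or_gt 0 a with ha | ha
    · exact lemA_mix hα0 hα1 hb.le ha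
    · have h := lemA_nn hα0 hα1 (by linarith : (0:ℝ) ≤ -a) (by linarith : -a ≤ -b)
      rw [bsgn_neg, bsgn_neg, abs_neg, abs_neg] at h
      calc α * (|a| + |b|) ^ (α - 1) * (a - b) ^ 2
          = α * (|b| + |a|) ^ (α - 1) * (-b - -a) ^ 2 := by rw [add_comm |a| |b|]; ring_nf
        _ ≤ (-bsgn α b - -bsgn α a) * (-b - -a) := h
        _ = (bsgn α a - bsgn α b) * (a - b) := by ring

lemma lemA {α : ℝ} (hα0 : 0 < α) (hα1 : α < 1) (a b : ℝ) :
    α * (|a| + |b|) ^ (α - 1) * (a - b) ^ 2 ≤ (bsgn α a - bsgn α b) * (a - b) := by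
  rcases le_total b a with hba | hab
  · exact lemA_le hα0 hα1 hba
  · have h := lemA_le hα0 hα1 hab
    calc α * (|a| + |b|) ^ (α - 1) * (a - b) ^ 2
        = α * (|b| + |a|) ^ (α - 1) * (b - a) ^ 2 := by rw [add_comm |a| |b|]; ring_nf
      _ ≤ (bsgn α b - bsgn α a) * (b - a) := h
      _ = (bsgn α a - bsgn α b) * (a - b) := by ring

lemma lemB_nn {α : ℝ} (hα0 : 0 < α) (hα1 : α < 1) {a b : ℝ} (hb : 0 ≤ b) (hba : b ≤ a) :
    (bsgn α a - bsgn α b) * (a - b) ≤ 2 * (|a| + |b|) ^ (α - 1) * (a - b) ^ 2 := by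
  have ha : 0 ≤ a := hb.trans hba
  rcases ha.eq_or_lt with rfl | ha
  · have hb0 : b = 0 := le_antisymm hba hb
    subst hb0; simp
  · rw [bsgn_of_nonneg hα0 ha.le, bsgn_of_nonneg hα0 hb]
    have hab : 0 ≤ a - b := by linarith
    -- h1 : a ^ α - b ^ α ≤ a ^ (α - 1) * (a - b)
    have hba' : b * a ^ (α - 1) ≤ b ^ α := by
      rcases hb.eq_or_lt with rfl | hbpos
      · simp [Real.zero_rpow hα0.ne']
      · have : a ^ (α - 1) ≤ b ^ (α - 1) :=
          Real.rpow_le_rpow_of_nonpos hbpos hba (by linarith)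
        have h2 := mul_le_mul_of_nonneg_left this hb
        have e : b * b ^ (α - 1) = b ^ α := by
          rw [mul_comm, ← Real.rpow_add_one hbpos.ne', sub_add_cancel]
        linarith [e ▸ h2]
    have ea : a ^ (α - 1) * a = a ^ α := by
      rw [← Real.rpow_add_one ha.ne', sub_add_cancel]
    have h1 : a ^ α - b ^ α ≤ a ^ (α - 1) * (a - b) := by nlinarith [hba', ea]
    -- h2 : a ^ (α - 1) ≤ 2 * (|a| + |b|) ^ (α - 1)
    have habpos : 0 < a + b := by linarith
    have m1 : (2 * a) ^ (α - 1) ≤ (a + b) ^ (α - 1) :=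
      Real.rpow_le_rpow_of_nonpos habpos (by linarith) (by linarith)
    have m2 : (2 * a) ^ (α - 1) = 2 ^ (α - 1) * a ^ (α - 1) :=
      Real.mul_rpow (by norm_num) ha.le
    have m3 : (2:ℝ) ^ (1 - α) ≤ 2 := by
      calc (2:ℝ) ^ (1 - α) ≤ 2 ^ (1:ℝ) :=
        Real.rpow_le_rpow_of_exponent_le one_le_two (by linarith)
      _ = 2 := Real.rpow_one 2
    have m4 : (2:ℝ) ^ (1 - α) * 2 ^ (α - 1) = 1 := by
      rw [← Real.rpow_add (by norm_num : (0:ℝ) < 2)]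
      norm_num
    have hrn : 0 ≤ (a + b) ^ (α - 1) := Real.rpow_nonneg habpos.le _
    have h2 : a ^ (α - 1) ≤ 2 * (a + b) ^ (α - 1) := by
      have step : a ^ (α - 1) = 2 ^ (1 - α) * (2 ^ (α - 1) * a ^ (α - 1)) := by
        rw [← mul_assoc, m4, one_mul]
      rw [step, ← m2]
      calc (2:ℝ) ^ (1 - α) * (2 * a) ^ (α - 1) ≤ 2 ^ (1 - α) * (a + b) ^ (α - 1) := by
            apply mul_le_mul_of_nonneg_left m1 (Real.rpow_nonneg (by norm_num) _)
        _ ≤ 2 * (a + b) ^ (α - 1) := mul_le_mul_of_nonneg_right m3 hrn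
    rw [abs_of_pos ha, abs_of_nonneg hb]
    nlinarith [mul_le_mul_of_nonneg_right h1 hab, mul_le_mul_of_nonneg_right h2 (mul_nonneg hab hab)]

lemma lemB_mix {α : ℝ} (hα0 : 0 < α) (hα1 : α < 1) {a b : ℝ} (hb : b ≤ 0) (ha : 0 ≤ a) :
    (bsgn α a - bsgn α b) * (a - b) ≤ 2 * (|a| + |b|) ^ (α - 1) * (a - b) ^ 2 := by
  set c : ℝ := -b with hc
  have hc0 : 0 ≤ c := by rw [hc]; linarith
  have habs : |a| + |b| = a + c := by rw [abs_of_nonneg ha, abs_of_nonpos hb]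
  have hbs : bsgn α b = -(c ^ α) := by
    rw [show b = -c by rw [hc]; ring, bsgn_neg, bsgn_of_nonneg hα0 hc0]
  have has : bsgn α a = a ^ α := bsgn_of_nonneg hα0 ha
  rw [habs, hbs, has, show a - b = a + c by rw [hc]; ring]
  rcases eq_or_lt_of_le (by positivity : (0:ℝ) ≤ a + c) with h0 | hpos
  · have ha0 : a = 0 := by linarith [hc0, ha]
    have hc0' : c = 0 := by linarith
    rw [ha0, hc0']
    simp [Real.zero_rpow hα0.ne']
  · have e : (a + c) ^ (α - 1) * (a + c) = (a + c) ^ α := by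
      rw [← Real.rpow_add_one hpos.ne', sub_add_cancel]
    have s1 : a ^ α ≤ (a + c) ^ α := Real.rpow_le_rpow ha (by linarith) hα0.le
    have s2 : c ^ α ≤ (a + c) ^ α := Real.rpow_le_rpow hc0 (by linarith) hα0.le
    calc (a ^ α - -(c ^ α)) * (a + c) = (a ^ α + c ^ α) * (a + c) := by ring
      _ ≤ (2 * (a + c) ^ α) * (a + c) := by nlinarith [s1, s2, hpos]
      _ = 2 * ((a + c) ^ (α - 1) * (a + c)) * (a + c) := by rw [e]
      _ = 2 * (a + c) ^ (α - 1) * (a + c) ^ 2 := by ring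

lemma lemB_le {α : ℝ} (hα0 : 0 < α) (hα1 : α < 1) {a b : ℝ} (hba : b ≤ a) :
    (bsgn α a - bsgn α b) * (a - b) ≤ 2 * (|a| + |b|) ^ (α - 1) * (a - b) ^ 2 := by
  rcases le_or_gt 0 b with hb | hb
  · exact lemB_nn hα0 hα1 hb hba
  · rcases le_or_gt 0 a with ha | ha
    · exact lemB_mix hα0 hα1 hb.le ha
    · have h := lemB_nn hα0 hα1 (by linarith : (0:ℝ) ≤ -a) (by linarith : -a ≤ -b)
      rw [bsgn_neg, bsgn_neg, abs_neg, abs_neg] at h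
      calc (bsgn α a - bsgn α b) * (a - b) = (-bsgn α b - -bsgn α a) * (-b - -a) := by ring
        _ ≤ 2 * (|b| + |a|) ^ (α - 1) * (-b - -a) ^ 2 := h
        _ = 2 * (|a| + |b|) ^ (α - 1) * (a - b) ^ 2 := by rw [add_comm |b| |a|]; ring_nf

lemma lemB {α : ℝ} (hα0 : 0 < α) (hα1 : α < 1) (a b : ℝ) :
    (bsgn α a - bsgn α b) * (a - b) ≤ 2 * (|a| + |b|) ^ (α - 1) * (a - b) ^ 2 := by
  rcases le_total b a with hba | hab
  · exact lemB_le hα0 hα1 hba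
  · have h := lemB_le hα0 hα1 hab
    calc (bsgn α a - bsgn α b) * (a - b) = (bsgn α b - bsgn α a) * (b - a) := by ring
      _ ≤ 2 * (|b| + |a|) ^ (α - 1) * (b - a) ^ 2 := h
      _ = 2 * (|a| + |b|) ^ (α - 1) * (a - b) ^ 2 := by rw [add_comm |b| |a|]; ring_nf

lemma tendsto_abs_rpow {α : ℝ} (hα0 : 0 < α) :
    Tendsto (fun y : ℝ => |y| ^ α) (nhds 0) (nhds 0) := by
  have h1 : ContinuousAt (fun t : ℝ => t ^ α) (|(0:ℝ)|) := by
    rw [abs_zero]; exact Real.continuousAt_rpow_const 0 α (Or.inr hα0.le)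
  have h2 := h1.comp (continuous_abs.continuousAt : ContinuousAt (fun t : ℝ => |t|) 0)
  simpa [ContinuousAt, Function.comp_def, Real.zero_rpow hα0.ne'] using h2

lemma continuous_bsgn {α : ℝ} (hα0 : 0 < α) : Continuous (bsgn α) := by
  rw [continuous_iff_continuousAt]
  intro x
  rcases eq_or_ne x 0 with rfl | hx
  · rw [ContinuousAt, bsgn_zero]
    have habs : ∀ y : ℝ, ‖bsgn α y‖ ≤ |y| ^ α := by
      intro y
      rcases eq_or_ne y 0 with rfl | hy
      · simp [bsgn_zero, Real.rpow_nonneg]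
      · have h1 : ‖bsgn α y‖ = |y| ^ (α - 1) * |y| := by
          rw [Real.norm_eq_abs, bsgn, abs_mul,
            abs_of_nonneg (Real.rpow_nonneg (abs_nonneg y) _)]
        rw [h1, ← Real.rpow_add_one (abs_ne_zero.2 hy), sub_add_cancel]
    exact squeeze_zero_norm habs (tendsto_abs_rpow hα0)
  · have h1 : ContinuousAt (fun y : ℝ => |y| ^ (α - 1)) x := by
      have := Real.continuousAt_rpow_const |x| (α - 1) (Or.inl (abs_ne_zero.2 hx))
      exact this.comp continuous_abs.continuousAt
    exact h1.mul continuousAt_id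

lemma hasDerivAt_Phi {α : ℝ} (hα0 : 0 < α) (hα1 : α < 1) (x : ℝ) :
    HasDerivAt (fun y : ℝ => |y| ^ (α + 1) / (α + 1)) (bsgn α x) x := by
  have hα1' : (0:ℝ) < α + 1 := by linarith
  rcases eq_or_ne x 0 with rfl | hx
  · rw [bsgn_zero, hasDerivAt_iff_tendsto_slope]
    have hb : ∀ᶠ y in nhdsWithin (0:ℝ) {(0:ℝ)}ᶜ,
        ‖slope (fun y : ℝ => |y| ^ (α + 1) / (α + 1)) 0 y‖ ≤ |y| ^ α / (α + 1) := by
      filter_upwards [self_mem_nhdsWithin] with y hy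
      have hy' : (y:ℝ) ≠ 0 := hy
      have hyabs : |y| ≠ 0 := abs_ne_zero.2 hy'
      have e : |y| ^ (α + 1) = |y| ^ α * |y| := Real.rpow_add_one hyabs α
      have h0 : |(0:ℝ)| ^ (α + 1) / (α + 1) = 0 := by
        simp [Real.zero_rpow hα1'.ne']
      rw [slope_def_field, h0, sub_zero, sub_zero, norm_div, Real.norm_eq_abs,
        Real.norm_eq_abs, abs_of_nonneg (by positivity : (0:ℝ) ≤ |y| ^ (α + 1) / (α + 1)), e]
      apply le_of_eq
      field_simp
    have hg : Tendsto (fun y : ℝ => |y| ^ α / (α + 1)) (nhdsWithin (0:ℝ) {(0:ℝ)}ᶜ) (nhds 0) := by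
      have h2' : Tendsto (fun y : ℝ => |y| ^ α / (α + 1)) (nhds 0) (nhds 0) := by
        simpa using (tendsto_abs_rpow hα0).div_const (α + 1)
      exact h2'.mono_left nhdsWithin_le_nhds
    exact squeeze_zero_norm' hb hg
  · have hxabs : |x| ≠ 0 := abs_ne_zero.2 hx
    have exa : |x| ^ α = |x| ^ (α - 1) * |x| := by
      rw [← Real.rpow_add_one hxabs, sub_add_cancel]
    rcases hx.lt_or_gt with hneg | hpos
    · have h1 : HasDerivAt (fun y : ℝ => |y| ^ (α + 1))
          ((-1) * (α + 1) * |x| ^ (α + 1 - 1)) x :=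
        (hasDerivAt_abs_neg hneg).rpow_const (Or.inl hxabs)
      have h2 := h1.div_const (α + 1)
      refine h2.congr_deriv ?_
      symm
      rw [show α + 1 - 1 = α by ring, bsgn, exa]
      rw [abs_of_neg hneg]
      field_simp
    · have h1 : HasDerivAt (fun y : ℝ => |y| ^ (α + 1))
          ((1:ℝ) * (α + 1) * |x| ^ (α + 1 - 1)) x :=
        (hasDerivAt_abs_pos hpos).rpow_const (Or.inl hxabs)
      have h2 := h1.div_const (α + 1)
      refine h2.congr_deriv ?_
      symm
      rw [show α + 1 - 1 = α by ring, bsgn, exa]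
      rw [abs_of_pos hpos]
      field_simp

lemma integral_bsgn {α : ℝ} (hα0 : 0 < α) (hα1 : α < 1) (v w : ℝ) :
    ∫ t in v..w, bsgn α t = |w| ^ (α + 1) / (α + 1) - |v| ^ (α + 1) / (α + 1) :=
  intervalIntegral.integral_eq_sub_of_hasDerivAt
    (fun x _ => hasDerivAt_Phi hα0 hα1 x)
    ((continuous_bsgn hα0).intervalIntegrable v w)

lemma abs_le_of_uIcc {v w t : ℝ} (ht : t ∈ Set.uIcc v w) : |t| ≤ |v| + |w| := by
  rw [Set.mem_uIcc] at ht
  rw [abs_le]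
  rcases ht with ⟨h1, h2⟩ | ⟨h1, h2⟩ <;>
    constructor <;>
    linarith [neg_abs_le v, le_abs_self v, neg_abs_le w, le_abs_self w, abs_nonneg v, abs_nonneg w]

lemma claim_pt {α : ℝ} (hα0 : 0 < α) (hα1 : α < 1) {v w t : ℝ} (ht : t ∈ Set.uIcc v w) :
    α * (2 * (|v| + |w|)) ^ (α - 1) * (t - v) ^ 2 ≤ (bsgn α t - bsgn α v) * (t - v) := by
  have hA := lemA hα0 hα1 t v
  rcases eq_or_lt_of_le (by positivity : (0:ℝ) ≤ |t| + |v|) with h0 | hpos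
  · have ht0 : t = 0 := by
      have := abs_nonneg t; have := abs_nonneg v
      have : |t| = 0 := by linarith
      exact abs_eq_zero.mp this
    have hv0 : v = 0 := by
      have := abs_nonneg t; have := abs_nonneg v
      have : |v| = 0 := by linarith
      exact abs_eq_zero.mp this
    rw [ht0, hv0]
    simp
  · have hle : |t| + |v| ≤ 2 * (|v| + |w|) := by
      have := abs_le_of_uIcc ht
      have := abs_nonneg w
      linarith [abs_nonneg v]
    have hmono : (2 * (|v| + |w|)) ^ (α - 1) ≤ (|t| + |v|) ^ (α - 1) :=
      Real.rpow_le_rpow_of_nonpos hpos hle (by linarith)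
    calc α * (2 * (|v| + |w|)) ^ (α - 1) * (t - v) ^ 2
        ≤ α * (|t| + |v|) ^ (α - 1) * (t - v) ^ 2 := by
          have := mul_le_mul_of_nonneg_left hmono hα0.le
          nlinarith [sq_nonneg (t - v)]
      _ ≤ (bsgn α t - bsgn α v) * (t - v) := hA

lemma lower_bound {α : ℝ} (hα0 : 0 < α) (hα1 : α < 1) (v w : ℝ) :
    α / 2 * (2 * (|v| + |w|)) ^ (α - 1) * (w - v) ^ 2 ≤
      |w| ^ (α + 1) / (α + 1) - |v| ^ (α + 1) / (α + 1) - bsgn α v * (w - v) := by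
  set K : ℝ := α * (2 * (|v| + |w|)) ^ (α - 1) with hK
  have hK0 : 0 ≤ K := by
    rw [hK]; positivity
  have hint_lin : ∀ a b : ℝ, IntervalIntegrable (fun t : ℝ => K * (t - v)) volume a b :=
    fun a b => (continuous_const.mul (continuous_id.sub continuous_const)).intervalIntegrable a b
  have hint_b : ∀ a b : ℝ, IntervalIntegrable (fun t : ℝ => bsgn α t - bsgn α v) volume a b :=
    fun a b => ((continuous_bsgn hα0).sub continuous_const).intervalIntegrable a b
  have hlinint : ∀ a b : ℝ, (∫ t in a..b, K * (t - v)) = K * ((b - v) ^ 2 - (a - v) ^ 2) / 2 := by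
    intro a b
    rw [intervalIntegral.integral_const_mul]
    have h1 : (∫ t in a..b, (t - v)) = ∫ t in a - v..b - v, t :=
      intervalIntegral.integral_comp_sub_right (fun x => x) v
    rw [h1, integral_id]
    ring
  have hbint : ∀ a b : ℝ, (∫ t in a..b, (bsgn α t - bsgn α v))
      = (|b| ^ (α + 1) / (α + 1) - |a| ^ (α + 1) / (α + 1)) - (b - a) * bsgn α v := by
    intro a b
    rw [intervalIntegral.integral_sub ((continuous_bsgn hα0).intervalIntegrable a b)
      (intervalIntegrable_const), integral_bsgn hα0 hα1, intervalIntegral.integral_const,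
      smul_eq_mul]
  rcases le_total v w with hvw | hwv
  · have hmono : (∫ t in v..w, K * (t - v)) ≤ ∫ t in v..w, (bsgn α t - bsgn α v) := by
      apply intervalIntegral.integral_mono_on hvw (hint_lin v w) (hint_b v w)
      intro t ht
      rcases eq_or_lt_of_le (ht.1 : v ≤ t) with rfl | hvt
      · simp
      · have hcl := claim_pt hα0 hα1 (v := v) (w := w)
          (t := t) (by rw [Set.uIcc_of_le hvw]; exact ht)
        rw [← hK] at hcl
        have h2 : (K * (t - v)) * (t - v) ≤ (bsgn α t - bsgn α v) * (t - v) := by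
          nlinarith [hcl]
        exact le_of_mul_le_mul_right h2 (by linarith)
    rw [hlinint v w, hbint v w] at hmono
    have e : ((v:ℝ) - v) ^ 2 = 0 := by ring
    rw [e] at hmono
    nlinarith [hmono]
  · have hmono : (∫ t in w..v, (bsgn α t - bsgn α v)) ≤ ∫ t in w..v, K * (t - v) := by
      apply intervalIntegral.integral_mono_on hwv (hint_b w v) (hint_lin w v)
      intro t ht
      rcases eq_or_lt_of_le (ht.2 : t ≤ v) with rfl | htv
      · simp
      · have hcl := claim_pt hα0 hα1 (v := v) (w := w)
          (t := t) (by rw [Set.uIcc_of_ge hwv]; exact ht)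
        rw [← hK] at hcl
        have h2 : (bsgn α t - bsgn α v) * (v - t) ≤ (K * (t - v)) * (v - t) := by
          nlinarith [hcl]
        exact le_of_mul_le_mul_right h2 (by linarith)
    rw [hlinint w v, hbint w v] at hmono
    have e : ((v:ℝ) - v) ^ 2 = 0 := by ring
    rw [e] at hmono
    nlinarith [hmono]

theorem bregman_two_sided_bound (α : ℝ) (hα0 : 0 < α) (hα1 : α < 1) :
    ∃ c : ℝ, 0 < c ∧ ∀ v w : ℝ,
      (1 / c) * (|w| + |v|) ^ (α - 1) * |w - v| ^ 2 ≤
        (1 / (α + 1)) * (|w| ^ (α + 1) - |v| ^ (α + 1)) +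
          (|v| ^ (α - 1) * v) * (v - w) ∧
      (1 / (α + 1)) * (|w| ^ (α + 1) - |v| ^ (α + 1)) +
          (|v| ^ (α - 1) * v) * (v - w) ≤
        c * (|w| + |v|) ^ (α - 1) * |w - v| ^ 2 := by
  refine ⟨4 / α + 2, by positivity, fun v w => ?_⟩
  have hα1' : (0:ℝ) < α + 1 := by linarith
  set M : ℝ := |w| + |v| with hM
  have hM0 : 0 ≤ M := by positivity
  have hMP : 0 ≤ M ^ (α - 1) := Real.rpow_nonneg hM0 _
  have hmid : (1 / (α + 1)) * (|w| ^ (α + 1) - |v| ^ (α + 1)) + (|v| ^ (α - 1) * v) * (v - w)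
      = |w| ^ (α + 1) / (α + 1) - |v| ^ (α + 1) / (α + 1) - bsgn α v * (w - v) := by
    rw [bsgn]; ring
  have hcomm : |v| + |w| = M := by rw [hM]; ring
  have hsq : |w - v| ^ 2 = (w - v) ^ 2 := sq_abs _
  constructor
  · -- lower bound
    have hlow := lower_bound hα0 hα1 v w
    rw [hcomm] at hlow
    have h2M : (2 * M) ^ (α - 1) = 2 ^ (α - 1) * M ^ (α - 1) :=
      Real.mul_rpow (by norm_num) hM0
    have hhalf : (1:ℝ) / 2 ≤ 2 ^ (α - 1) := by
      have := Real.rpow_le_rpow_of_exponent_le (one_le_two) (by linarith : (-1:ℝ) ≤ α - 1)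
      rw [Real.rpow_neg_one] at this
      linarith
    have hc : 1 / (4 / α + 2) ≤ α / 4 := by
      rw [div_le_div_iff₀ (by positivity) (by norm_num)]
      have h4 : α * (4 / α) = 4 := by field_simp
      nlinarith [h4, hα0.le]
    rw [hmid, hsq]
    calc (1 / (4 / α + 2)) * M ^ (α - 1) * (w - v) ^ 2
        ≤ (α / 4) * M ^ (α - 1) * (w - v) ^ 2 := by
          apply mul_le_mul_of_nonneg_right (mul_le_mul_of_nonneg_right hc hMP) (sq_nonneg _)
      _ ≤ α / 2 * (2 * M) ^ (α - 1) * (w - v) ^ 2 := by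
          rw [h2M]
          have key := mul_le_mul_of_nonneg_right hhalf hMP
          nlinarith [sq_nonneg (w - v), hα0.le, mul_nonneg hα0.le (sq_nonneg (w - v))]
      _ ≤ _ := hlow
  · -- upper bound
    have hlow' := lower_bound hα0 hα1 w v
    have hBwv : 0 ≤ |v| ^ (α + 1) / (α + 1) - |w| ^ (α + 1) / (α + 1) - bsgn α w * (v - w) := by
      refine le_trans ?_ hlow'
      positivity
    have hB := lemB hα0 hα1 w v
    rw [← hM] at hB
    have hc2 : (0:ℝ) ≤ 4 / α := by positivity
    have hP : 0 ≤ M ^ (α - 1) * (w - v) ^ 2 := mul_nonneg hMP (sq_nonneg _)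
    rw [hmid, hsq]
    nlinarith [hB, hBwv, mul_nonneg hc2 hP]
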